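/- Combining the union bound with the Hoeffding-type bound: if $\mathbf{u}$ has independent bits with per-bit disagreement probabilities $q_i = \Pr[u_i \ne c_{j,i}]$, and for every $l \ne j$ the sum $\sum_{i \in D_{jl}} q_i < |D_{jl}|/2$ where $D_{jl} = \{i : c_{j,i} \ne c_{l,i}\}$, then the misclassification probability satisfies $P_e \le \sum_{l \ne j}\big(1 - \lambda_{jl}^2\big)^{|D_{jl}|/2}$ with $\lambda_{jl} = \frac{1}{|D_{jl}|}\sum_{i \in D_{jl}}(2q_i - 1)$. -/

import Mathlib

open MeasureTheory ProbabilityTheory Real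


lemma amgm {ι : Type*} (s : Finset ι) (z : ι → ℝ) (hz : ∀ i ∈ s, 0 ≤ z i) :
    ∏ i ∈ s, z i ≤ ((∑ i ∈ s, z i) / s.card) ^ s.card := by
  rcases s.eq_empty_or_nonempty with rfl | hs
  · simp
  have hd : (0:ℝ) < s.card := by exact_mod_cast Finset.card_pos.2 hs
  have h := Real.geom_mean_le_arith_mean_weighted s (fun _ => (s.card:ℝ)⁻¹) z
    (fun i _ => by positivity) (by simp [Finset.sum_const]; field_simp) hz
  have h1 : ∏ i ∈ s, z i = (∏ i ∈ s, z i ^ ((s.card:ℝ)⁻¹)) ^ s.card := by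
    rw [← Finset.prod_pow]
    refine Finset.prod_congr rfl fun i hi => ?_
    rw [← Real.rpow_natCast (z i ^ ((s.card:ℝ)⁻¹)), ← Real.rpow_mul (hz i hi),
      inv_mul_cancel₀ hd.ne', Real.rpow_one]
  rw [h1]
  have h2 : (∑ i ∈ s, z i) / s.card = ∑ i ∈ s, (s.card:ℝ)⁻¹ * z i := by
    rw [← Finset.mul_sum]; ring
  rw [h2]
  exact pow_le_pow_left₀ (Finset.prod_nonneg fun i hi => Real.rpow_nonneg (hz i hi) _) h _

lemma per_pair {Ω : Type*} [MeasurableSpace Ω] (μ : Measure Ω) [IsProbabilityMeasure μ]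
    (n : ℕ) (u : Ω → Fin n → Bool) (hmeas : ∀ i, Measurable fun ω => u ω i)
    (hindep : iIndepFun (fun i ω => u ω i) μ)
    (v : Fin n → Bool) (s : Finset (Fin n)) (q : Fin n → ℝ)
    (hq : ∀ i, q i = (μ {ω | u ω i ≠ v i}).toReal)
    (hcond : ∑ i ∈ s, q i < (s.card : ℝ) / 2) :
    (μ {ω | (s.card : ℝ) / 2 ≤ ∑ i ∈ s, (if u ω i ≠ v i then (1:ℝ) else 0)}).toReal ≤
      (1 - ((∑ i ∈ s, (2 * q i - 1)) / (s.card : ℝ)) ^ 2) ^ ((s.card : ℝ) / 2) := by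
  classical
  set X : Fin n → Ω → ℝ := fun i => (fun b => if b ≠ v i then (1:ℝ) else 0) ∘ (fun ω => u ω i)
    with hXdef
  have hXmeas : ∀ i, Measurable (X i) := fun i =>
    (measurable_of_countable _).comp (hmeas i)
  have hA : ∀ i, MeasurableSet {ω | u ω i ≠ v i} := fun i => by
    have : {ω | u ω i ≠ v i} = (fun ω => u ω i) ⁻¹' {b | b ≠ v i} := rfl
    rw [this]; exact (hmeas i) (by trivial)
  have hq0 : ∀ i, 0 ≤ q i := fun i => (hq i) ▸ ENNReal.toReal_nonneg
  have hq1 : ∀ i, q i ≤ 1 := by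
    intro i
    rw [hq i]
    have := ENNReal.toReal_mono (by simp) (prob_le_one (μ := μ) (s := {ω | u ω i ≠ v i}))
    simpa using this
  have hsum0 : 0 ≤ ∑ i ∈ s, q i := Finset.sum_nonneg fun i _ => hq0 i
  have hd : (0:ℝ) < s.card := by linarith
  have hXval : ∀ i ω, X i ω = if u ω i ≠ v i then (1:ℝ) else 0 := fun i ω => rfl
  have hX01 : ∀ i ω, 0 ≤ X i ω ∧ X i ω ≤ 1 := by
    intro i ω; rw [hXval]; split <;> norm_num
  -- the event in terms of X
  have hEvent : {ω | (s.card : ℝ) / 2 ≤ ∑ i ∈ s, (if u ω i ≠ v i then (1:ℝ) else 0)}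
      = {ω | (s.card : ℝ) / 2 ≤ (∑ i ∈ s, X i) ω} := by
    ext ω; simp only [Set.mem_setOf_eq, Finset.sum_apply, hXval]
  rw [hEvent]
  set lam : ℝ := (∑ i ∈ s, (2 * q i - 1)) / (s.card : ℝ) with hlamdef
  have hlam : lam = 2 * ((∑ i ∈ s, q i) / s.card) - 1 := by
    rw [hlamdef, Finset.sum_sub_distrib, Finset.sum_const, ← Finset.mul_sum]
    field_simp
    rw [nsmul_eq_mul, mul_one]
  set a : ℝ := (∑ i ∈ s, q i) / s.card with hadef
  have ha0 : 0 ≤ a := div_nonneg hsum0 hd.le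
  have ha2 : a < 1/2 := by
    rw [hadef, div_lt_iff₀ hd]; linarith
  have hfinal : 1 - lam ^ 2 = 4 * a * (1 - a) := by rw [hlam]; ring
  rcases eq_or_lt_of_le hsum0 with hzero | hpos
  · -- all q i = 0, event is null
    have hqz : ∀ i ∈ s, q i = 0 := by
      intro i hi
      exact (Finset.sum_eq_zero_iff_of_nonneg fun i _ => hq0 i).1 hzero.symm i hi
    have hmuz : ∀ i ∈ s, μ {ω | u ω i ≠ v i} = 0 := by
      intro i hi
      have := hqz i hi
      rw [hq i] at this
      exact (ENNReal.toReal_eq_zero_iff _).1 this |>.resolve_right (measure_ne_top μ _)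
    have hsub : {ω | (s.card : ℝ) / 2 ≤ (∑ i ∈ s, X i) ω} ⊆ ⋃ i ∈ s, {ω | u ω i ≠ v i} := by
      intro ω hω
      by_contra hc
      simp only [Set.mem_iUnion, Set.mem_setOf_eq, not_exists, not_and] at hc
      push_neg at hc
      have : (∑ i ∈ s, X i) ω = 0 := by
        rw [Finset.sum_apply]
        refine Finset.sum_eq_zero fun i hi => ?_
        rw [hXval, if_neg (by simp [hc i hi])]
      rw [Set.mem_setOf_eq, this] at hω
      linarith
    have hnull : μ {ω | (s.card : ℝ) / 2 ≤ (∑ i ∈ s, X i) ω} = 0 := by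
      refine le_antisymm ?_ zero_le
      refine le_trans (measure_mono hsub) ?_
      refine le_trans (measure_biUnion_finset_le s _) ?_
      rw [Finset.sum_eq_zero hmuz]
    rw [hnull]
    simp only [ENNReal.toReal_zero]
    have ha : a = 0 := by rw [hadef, ← hzero]; simp
    rw [hfinal, ha]
    simp only [mul_zero, zero_mul, mul_one]
    rw [Real.zero_rpow (by positivity)]
  · -- Chernoff bound
    have ha0' : 0 < a := div_pos hpos hd
    have h1a : 0 < 1 - a := by linarith
    set t : ℝ := Real.log ((1 - a) / a) with htdef
    have hratio : (1:ℝ) ≤ (1 - a) / a := (one_le_div ha0').2 (by linarith)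
    have ht0 : 0 ≤ t := Real.log_nonneg hratio
    have hexp : Real.exp t = (1 - a) / a := Real.exp_log (div_pos h1a ha0')
    have hSle : ∀ ω, (∑ i ∈ s, X i) ω ≤ s.card := by
      intro ω
      rw [Finset.sum_apply]
      calc ∑ i ∈ s, X i ω ≤ ∑ i ∈ s, 1 := Finset.sum_le_sum fun i hi => (hX01 i ω).2
        _ = s.card := by simp
    have hSfun : (∑ i ∈ s, X i) = fun ω => ∑ i ∈ s, X i ω := by
      ext ω; simp [Finset.sum_apply]
    have hSmeas : Measurable (∑ i ∈ s, X i) := by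
      rw [hSfun]; exact Finset.measurable_sum s fun i _ => hXmeas i
    have hint : Integrable (fun ω => Real.exp (t * (∑ i ∈ s, X i) ω)) μ := by
      refine Integrable.mono' (integrable_const (Real.exp (t * s.card)))
        ((hSmeas.const_mul t).exp.aestronglyMeasurable) ?_
      filter_upwards with ω
      rw [Real.norm_eq_abs, Real.abs_exp]
      exact Real.exp_le_exp.2 (mul_le_mul_of_nonneg_left (hSle ω) ht0)
    have hchernoff := measure_ge_le_exp_mul_mgf (μ := μ) (X := ∑ i ∈ s, X i)
      ((s.card : ℝ) / 2) ht0 hint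
    have hXindep : iIndepFun X μ :=
      hindep.comp _ (fun i => measurable_of_countable _)
    have hmgf_sum : mgf (∑ i ∈ s, X i) μ t = ∏ i ∈ s, mgf (X i) μ t :=
      hXindep.mgf_sum hXmeas s
    have hmgf_i : ∀ i, mgf (X i) μ t = 1 - q i + q i * Real.exp t := by
      intro i
      have heq : (fun ω => Real.exp (t * X i ω))
          = fun ω => 1 + Set.indicator {ω | u ω i ≠ v i} (fun _ => Real.exp t - 1) ω := by
        ext ω
        by_cases h : u ω i ≠ v i
        · have hx : X i ω = 1 := by rw [hXval, if_pos h]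
          have hm : ω ∈ {ω | u ω i ≠ v i} := h
          rw [hx, mul_one, Set.indicator_of_mem hm]; ring
        · have hx : X i ω = 0 := by rw [hXval, if_neg h]
          have hm : ω ∉ {ω | u ω i ≠ v i} := h
          rw [hx, mul_zero, Real.exp_zero, Set.indicator_of_notMem hm]; ring
      rw [mgf, heq, integral_add (integrable_const 1)
        ((integrable_const _).indicator (hA i)), integral_const,
        integral_indicator_const _ (hA i)]
      simp only [measureReal_def, measure_univ, ENNReal.toReal_one, smul_eq_mul, one_mul, mul_one]
      rw [← hq i]; ring
    have hterm_nonneg : ∀ i ∈ s, 0 ≤ 1 - q i + q i * Real.exp t := by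
      intro i _
      have := Real.exp_pos t
      have := hq0 i
      have := hq1 i
      nlinarith
    have hprod_le : ∏ i ∈ s, mgf (X i) μ t ≤ (1 - a + a * Real.exp t) ^ s.card := by
      have h1 : ∏ i ∈ s, mgf (X i) μ t = ∏ i ∈ s, (1 - q i + q i * Real.exp t) :=
        Finset.prod_congr rfl fun i _ => hmgf_i i
      have h2 : (∑ i ∈ s, (1 - q i + q i * Real.exp t)) / s.card
          = 1 - a + a * Real.exp t := by
        rw [hadef]
        rw [show (∑ i ∈ s, (1 - q i + q i * Real.exp t))
            = s.card - (∑ i ∈ s, q i) + (∑ i ∈ s, q i) * Real.exp t by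
          rw [Finset.sum_add_distrib, Finset.sum_sub_distrib, Finset.sum_const,
            ← Finset.sum_mul]; simp]
        field_simp
      rw [h1, ← h2]
      exact amgm s _ hterm_nonneg
    -- put it together
    have hval : 1 - a + a * Real.exp t = 2 * (1 - a) := by
      rw [hexp, ← mul_div_assoc, mul_div_cancel_left₀ _ ha0'.ne']; ring
    have key : Real.exp (-t * ((s.card : ℝ) / 2)) * (2 * (1 - a)) ^ s.card
        = (4 * a * (1 - a)) ^ ((s.card : ℝ) / 2) := by
      have hnt : -t = Real.log (a / (1 - a)) := by
        rw [htdef, ← Real.log_inv, inv_div]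
      have e1 : Real.exp (-t * ((s.card : ℝ) / 2)) = (a / (1 - a)) ^ ((s.card : ℝ) / 2) := by
        rw [hnt, ← Real.rpow_def_of_pos (div_pos ha0' h1a)]
      have e2 : ((2 * (1 - a)) ^ s.card : ℝ) = ((2 * (1 - a)) ^ (2:ℝ)) ^ ((s.card : ℝ) / 2) := by
        rw [← Real.rpow_natCast (2 * (1 - a)) s.card, ← Real.rpow_mul (by linarith)]
        congr 1
        ring
      rw [e1, e2, ← Real.mul_rpow (div_pos ha0' h1a).le (Real.rpow_nonneg (by linarith) _)]
      congr 1
      rw [Real.rpow_two]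
      field_simp
      ring
    rw [hfinal, ← key]
    calc (μ {ω | (s.card : ℝ) / 2 ≤ (∑ i ∈ s, X i) ω}).toReal
        ≤ Real.exp (-t * ((s.card : ℝ) / 2)) * mgf (∑ i ∈ s, X i) μ t := hchernoff
      _ ≤ Real.exp (-t * ((s.card : ℝ) / 2)) * (2 * (1 - a)) ^ s.card := by
          refine mul_le_mul_of_nonneg_left ?_ (Real.exp_pos _).le
          rw [hmgf_sum, ← hval]
          exact hprod_le

lemma hamming_incl (n : ℕ) (u : Fin n → Bool) (cj cl : Fin n → Bool)
    (dH : (Fin n → Bool) → (Fin n → Bool) → ℕ)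
    (hdH : ∀ x y, dH x y = (Finset.univ.filter fun i => x i ≠ y i).card)
    (s : Finset (Fin n)) (hs : s = Finset.univ.filter fun i => cj i ≠ cl i)
    (hω : dH u cl ≤ dH u cj) :
    ((s.card : ℝ)) / 2 ≤ ∑ i ∈ s, (if u i ≠ cj i then (1:ℝ) else 0) := by
  classical
  have hmem : ∀ i, i ∈ s ↔ cj i ≠ cl i := by intro i; rw [hs]; simp
  have hsplit : ∀ (p : Fin n → Prop) [DecidablePred p],
      (Finset.univ.filter p).card = (s.filter p).card + (sᶜ.filter p).card := by
    intro p _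
    rw [← Finset.card_union_of_disjoint
      (Finset.disjoint_filter_filter disjoint_compl_right), ← Finset.filter_union,
      Finset.union_compl]
  have hout : (sᶜ.filter fun i => u i ≠ cl i).card = (sᶜ.filter fun i => u i ≠ cj i).card := by
    congr 1
    apply Finset.filter_congr
    intro i hi
    have hcc : cj i = cl i := by
      have := (hmem i)
      rw [Finset.mem_compl] at hi
      by_contra hne
      exact hi (this.2 hne)
    rw [hcc]
  have hin : (s.filter fun i => u i ≠ cl i).card + (s.filter fun i => u i ≠ cj i).card
      = s.card := by
    have hiff : ∀ i ∈ s, (u i ≠ cl i) ↔ ¬(u i ≠ cj i) := by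
      intro i hi
      have hne := (hmem i).1 hi
      cases hju : cj i <;> cases hlu : cl i <;> cases huu : u i <;> simp_all
    rw [Finset.filter_congr hiff, add_comm,
      Finset.card_filter_add_card_filter_not]
  have hkey : s.card ≤ 2 * (s.filter fun i => u i ≠ cj i).card := by
    rw [hdH, hdH, hsplit, hsplit, hout] at hω
    omega
  rw [Finset.sum_boole]
  have h2 : (s.card : ℝ) ≤ 2 * ((s.filter fun i => u i ≠ cj i).card : ℝ) := by
    exact_mod_cast hkey
  linarith


theorem stmt7 {Ω : Type*} [MeasurableSpace Ω] (μ : Measure Ω)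
    [IsProbabilityMeasure μ] (n M : ℕ)
    (u : Ω → Fin n → Bool) (hmeas : ∀ i, Measurable fun ω => u ω i)
    (hindep : iIndepFun (fun i ω => u ω i) μ)
    (c : Fin M → Fin n → Bool) (j : Fin M)
    (dH : (Fin n → Bool) → (Fin n → Bool) → ℕ)
    (hdH : ∀ x y, dH x y = (Finset.univ.filter fun i => x i ≠ y i).card)
    (D : Fin M → Finset (Fin n))
    (hD : ∀ l, D l = Finset.univ.filter fun i => c j i ≠ c l i)
    (q : Fin n → ℝ) (hq : ∀ i, q i = (μ {ω | u ω i ≠ c j i}).toReal)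
    (hcond : ∀ l ∈ Finset.univ.erase j, ∑ i ∈ D l, q i < ((D l).card : ℝ) / 2)
    (lam : Fin M → ℝ)
    (hlam : ∀ l, lam l = (∑ i ∈ D l, (2 * q i - 1)) / ((D l).card : ℝ)) :
    (μ {ω | ∃ l, l ≠ j ∧ dH (u ω) (c l) ≤ dH (u ω) (c j)}).toReal ≤
      ∑ l ∈ Finset.univ.erase j, (1 - lam l ^ 2) ^ (((D l).card : ℝ) / 2) := by
  classical
  have hset : {ω | ∃ l, l ≠ j ∧ dH (u ω) (c l) ≤ dH (u ω) (c j)}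
      = ⋃ l ∈ Finset.univ.erase j, {ω | dH (u ω) (c l) ≤ dH (u ω) (c j)} := by
    ext ω
    simp only [Set.mem_setOf_eq, Set.mem_iUnion, Finset.mem_erase, Finset.mem_univ,
      and_true, exists_prop]
  have hsum_ne : (∑ l ∈ Finset.univ.erase j, μ {ω | dH (u ω) (c l) ≤ dH (u ω) (c j)}) ≠ ⊤ := by
    exact ENNReal.sum_ne_top.2 fun l _ => measure_ne_top μ _
  calc (μ {ω | ∃ l, l ≠ j ∧ dH (u ω) (c l) ≤ dH (u ω) (c j)}).toReal
      ≤ (∑ l ∈ Finset.univ.erase j, μ {ω | dH (u ω) (c l) ≤ dH (u ω) (c j)}).toReal := by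
        refine ENNReal.toReal_mono hsum_ne ?_
        rw [hset]
        exact measure_biUnion_finset_le _ _
    _ = ∑ l ∈ Finset.univ.erase j, (μ {ω | dH (u ω) (c l) ≤ dH (u ω) (c j)}).toReal :=
        ENNReal.toReal_sum fun l _ => measure_ne_top μ _
    _ ≤ ∑ l ∈ Finset.univ.erase j, (1 - lam l ^ 2) ^ (((D l).card : ℝ) / 2) := by
        refine Finset.sum_le_sum fun l hl => ?_
        have hlj : l ≠ j := (Finset.mem_erase.1 hl).1
        have hsub : {ω | dH (u ω) (c l) ≤ dH (u ω) (c j)} ⊆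
            {ω | ((D l).card : ℝ) / 2 ≤ ∑ i ∈ D l, (if u ω i ≠ c j i then (1:ℝ) else 0)} := by
          intro ω hω
          exact hamming_incl n (u ω) (c j) (c l) dH hdH (D l) (hD l) hω
        calc (μ {ω | dH (u ω) (c l) ≤ dH (u ω) (c j)}).toReal
            ≤ (μ {ω | ((D l).card : ℝ) / 2 ≤
                ∑ i ∈ D l, (if u ω i ≠ c j i then (1:ℝ) else 0)}).toReal :=
              ENNReal.toReal_mono (measure_ne_top μ _) (measure_mono hsub)
          _ ≤ (1 - ((∑ i ∈ D l, (2 * q i - 1)) / (((D l).card : ℝ))) ^ 2)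
                ^ (((D l).card : ℝ) / 2) :=
              per_pair μ n u hmeas hindep (c j) (D l) q hq (hcond l hl)
          _ = (1 - lam l ^ 2) ^ (((D l).card : ℝ) / 2) := by rw [hlam l]
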